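/- Splitting rule for the DFT: for n = km, F_n = L^n_k (I_k ⊗ F_m) W^n_m (F_k ⊗ I_m). -/

import Mathlib

open Complex Matrix

/-- The N×N DFT matrix `F_N = (ω_N^{jl})` with `ω_N = exp(−2πi/N)`. -/
noncomputable def dftMat (N : ℕ) : Matrix (Fin N) (Fin N) ℂ :=
  Matrix.of fun j l =>
    Complex.exp (-2 * Real.pi * Complex.I / N) ^ ((j : ℕ) * (l : ℕ))

/-- Stride permutation matrix `L^n_k`. -/
noncomputable def strideMat (n k : ℕ) : Matrix (Fin n) (Fin n) ℂ :=
  Matrix.of fun r c =>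
    if (r : ℕ) = ((c : ℕ) % (n / k)) * k + (c : ℕ) / (n / k) then 1 else 0

/-- Twiddle diagonal matrix `W^n_d`. -/
noncomputable def twiddleMat (n d : ℕ) : Matrix (Fin n) (Fin n) ℂ :=
  Matrix.diagonal fun x =>
    Complex.exp (-2 * Real.pi * Complex.I / n) ^ (((x : ℕ) / d) * ((x : ℕ) % d))

/-- `I_{n/m} ⊗ F_m` as an n×n matrix. -/
noncomputable def idKronDFT (n m : ℕ) : Matrix (Fin n) (Fin n) ℂ :=
  Matrix.of fun r c =>
    if (r : ℕ) / m = (c : ℕ) / m then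
      Complex.exp (-2 * Real.pi * Complex.I / m) ^ (((r : ℕ) % m) * ((c : ℕ) % m))
    else 0

/-- `F_k ⊗ I_{n/k}` as an n×n matrix. -/
noncomputable def dftKronId (n k : ℕ) : Matrix (Fin n) (Fin n) ℂ :=
  Matrix.of fun r c =>
    if (r : ℕ) % (n / k) = (c : ℕ) % (n / k) then
      Complex.exp (-2 * Real.pi * Complex.I / k) ^ (((r : ℕ) / (n / k)) * ((c : ℕ) / (n / k)))
    else 0

/-- Splitting rule for the DFT: for n = km,
`F_n = L^n_k (I_k ⊗ F_m) W^n_m (F_k ⊗ I_m)`. -/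


lemma aux_lt {a b k m : ℕ} (ha : a < k) (hb : b < m) : a * m + b < k * m :=
  calc a * m + b < a * m + m := by omega
  _ = (a + 1) * m := by ring
  _ ≤ k * m := Nat.mul_le_mul_right m ha

lemma aux_div {a b k : ℕ} (hk : 0 < k) (hb : b < k) : (a * k + b) / k = a := by
  rw [mul_comm, Nat.mul_add_div hk, Nat.div_eq_of_lt hb, add_zero]

lemma aux_mod {a b k : ℕ} (hb : b < k) : (a * k + b) % k = b := by
  rw [mul_comm, Nat.mul_add_mod, Nat.mod_eq_of_lt hb]

lemma exp_pow_root (k m : ℕ) (hk : 0 < k) (hm : 0 < m) :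
    Complex.exp (-2 * Real.pi * Complex.I / m) =
      Complex.exp (-2 * Real.pi * Complex.I / (k * m)) ^ k := by
  rw [← Complex.exp_nat_mul]
  congr 1
  have hk' : (k : ℂ) ≠ 0 := Nat.cast_ne_zero.mpr hk.ne'
  have hm' : (m : ℂ) ≠ 0 := Nat.cast_ne_zero.mpr hm.ne'
  field_simp

lemma exp_pow_n (k m : ℕ) (hk : 0 < k) (hm : 0 < m) :
    Complex.exp (-2 * Real.pi * Complex.I / (k * m)) ^ (k * m) = 1 := by
  rw [← Complex.exp_nat_mul]
  have h : ((k * m : ℕ) : ℂ) ≠ 0 := Nat.cast_ne_zero.mpr (Nat.mul_ne_zero hk.ne' hm.ne')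
  have : ((k * m : ℕ) : ℂ) * (-2 * Real.pi * Complex.I / (k * m)) = (-1 : ℤ) * (2 * Real.pi * Complex.I) := by
    push_cast at h ⊢
    field_simp
    have hk' : (k : ℂ) ≠ 0 := Nat.cast_ne_zero.mpr hk.ne'
    have hm' : (m : ℂ) ≠ 0 := Nat.cast_ne_zero.mpr hm.ne'
    field_simp
  rw [this, Complex.exp_int_mul_two_pi_mul_I]

theorem stmt7 (n k m : ℕ) (hk : 0 < k) (hm : 0 < m) (hn : n = k * m) :
    dftMat n = strideMat n k * idKronDFT n m * twiddleMat n m * dftKronId n k := by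
  subst hn
  have hkm : k * m / k = m := Nat.mul_div_cancel_left m hk
  ext r j
  have hr := r.isLt
  have hj := j.isLt
  have hrk : (r : ℕ) / k < m := Nat.div_lt_of_lt_mul hr
  have hjm : (j : ℕ) / m < k := Nat.div_lt_of_lt_mul (Nat.lt_of_lt_of_eq hj (mul_comm k m))
  set ω : ℂ := Complex.exp (-2 * Real.pi * Complex.I / (k * m)) with hω
  -- the special columns
  set c0 : Fin (k * m) := ⟨(r : ℕ) % k * m + (r : ℕ) / k,
    aux_lt (Nat.mod_lt _ hk) hrk⟩ with hc0
  set x0 : Fin (k * m) := ⟨(r : ℕ) % k * m + (j : ℕ) % m,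
    aux_lt (Nat.mod_lt _ hk) (Nat.mod_lt _ hm)⟩ with hx0
  have hc0m : (c0 : ℕ) % m = (r : ℕ) / k := aux_mod hrk
  have hc0d : (c0 : ℕ) / m = (r : ℕ) % k := aux_div hm hrk
  have hx0m : (x0 : ℕ) % m = (j : ℕ) % m := aux_mod (Nat.mod_lt _ hm)
  have hx0d : (x0 : ℕ) / m = (r : ℕ) % k := aux_div hm (Nat.mod_lt _ hm)
  rw [mul_assoc, mul_assoc]
  rw [Matrix.mul_apply]
  rw [Finset.sum_eq_single c0]
  · rw [Matrix.mul_apply]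
    rw [Finset.sum_eq_single x0]
    · simp only [strideMat, idKronDFT, twiddleMat, dftKronId, Matrix.of_apply, hkm,
        Matrix.diagonal_mul, Matrix.of_apply]
      have e1 : ((r:ℕ) % k * m + (r:ℕ) / k) % m = (r:ℕ) / k := aux_mod hrk
      have e2 : ((r:ℕ) % k * m + (r:ℕ) / k) / m = (r:ℕ) % k := aux_div hm hrk
      have e3 : ((r:ℕ) % k * m + (j:ℕ) % m) % m = (j:ℕ) % m := aux_mod (Nat.mod_lt _ hm)
      have e4 : ((r:ℕ) % k * m + (j:ℕ) % m) / m = (r:ℕ) % k := aux_div hm (Nat.mod_lt _ hm)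
      rw [e1, e2, e3, e4, if_pos (Nat.div_add_mod' (r:ℕ) k).symm, if_pos rfl, if_pos rfl,
        one_mul]
      simp only [dftMat, Matrix.of_apply]
      push_cast
      rw [exp_pow_root k m hk hm, exp_pow_root m k hm hk, mul_comm (m:ℂ) (k:ℂ),
        ← pow_mul, ← pow_mul, ← pow_add, ← pow_add]
      have key : (r:ℕ) * (j:ℕ) =
          (k * ((r:ℕ)/k * ((j:ℕ)%m)) + ((r:ℕ)%k * ((j:ℕ)%m) + m * ((r:ℕ)%k * ((j:ℕ)/m))))
            + k * m * ((r:ℕ)/k * ((j:ℕ)/m)) := by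
        conv_lhs => rw [← Nat.div_add_mod (r:ℕ) k, ← Nat.div_add_mod (j:ℕ) m]
        ring
      rw [key, pow_add, pow_mul, exp_pow_n k m hk hm, one_pow, mul_one]
    · intro x _ hx
      simp only [strideMat, idKronDFT, twiddleMat, dftKronId, Matrix.of_apply, hkm,
        Matrix.diagonal_mul, Matrix.of_apply]
      by_cases h1 : (c0 : ℕ) / m = (x : ℕ) / m
      · rw [if_pos h1]
        by_cases h2 : (x : ℕ) % m = (j : ℕ) % m
        · exfalso
          apply hx
          apply Fin.ext
          have : (x : ℕ) = (x:ℕ)/m * m + (x:ℕ)%m := (Nat.div_add_mod' _ _).symm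
          rw [this, ← h1, hc0d, h2]
        · rw [if_neg h2, mul_zero, mul_zero]
      · rw [if_neg h1, zero_mul]
    · intro h
      exact absurd (Finset.mem_univ x0) h
  · intro c _ hc
    simp only [strideMat, Matrix.of_apply, hkm]
    rw [if_neg, zero_mul]
    intro hcon
    apply hc
    apply Fin.ext
    have hcd : (c : ℕ) / m < k := Nat.div_lt_of_lt_mul (Nat.lt_of_lt_of_eq c.isLt (mul_comm k m))
    have h1 : (r : ℕ) / k = (c : ℕ) % m := by rw [hcon]; exact aux_div hk hcd
    have h2 : (r : ℕ) % k = (c : ℕ) / m := by rw [hcon]; exact aux_mod hcd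
    show (c : ℕ) = (c0 : ℕ)
    rw [hc0]
    simp only
    rw [h1, h2, Nat.div_add_mod']
  · intro h
    exact absurd (Finset.mem_univ c0) h
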